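/- Define π: Sₙ → Kₙ by π(u) = u(1), where Sₙ is the Cayley graph of the symmetric group with all transpositions as generators and axial function α(u, u·(i,j)) = x_{u(i)} − x_{u(j)} for i < j, and Kₙ is the complete graph with α(i,j) = x_i − x_j. Then π is a GKM fiber bundle: it is a graph fibration whose horizontal edges at u are exactly {(u, u·(1,j)) : 2 ≤ j ≤ n}, the edge labels are preserved under lifting, and the transition maps Φ_{i,j}(u) = (i,j)·u between fibers are isomorphisms of GKM graphs with linear parts Ψ_{i,j}(x_r) = x_{(i,j)(r)}. -/

import Mathlib

open MvPolynomial Equiv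

/-- The map `π : Sₙ → Kₙ`, `π(u) = u(1)` (here `0`-indexed), from the Cayley graph of
the symmetric group with all transpositions as generators and axial function
`α(u, u·(i,j)) = x_{u(i)} − x_{u(j)}`, to the complete graph `Kₙ` with
`α(i,j) = x_i − x_j`, is a GKM fiber bundle: it is a graph fibration whose horizontal
edges at `u` are exactly the `(u, u·(1,j))`, the edge labels are preserved under
lifting, and the transition maps `Φ_{i,j}(u) = (i,j)·u` between fibers are
isomorphisms of GKM graphs with linear parts `Ψ_{i,j}(x_r) = x_{(i,j)(r)}`. -/
theorem perm_over_complete_is_gkm_bundle (n : ℕ) :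
    -- the edge `(u, u·(i,j))` is vertical iff `1 ∉ {i,j}`; horizontal iff `1 ∈ {i,j}`
    (∀ (u : Perm (Fin (n + 1))) (i j : Fin (n + 1)), i ≠ j →
      ((u * Equiv.swap i j) 0 = u 0 ↔ (i ≠ 0 ∧ j ≠ 0))) ∧
    -- graph fibration: each edge of `Kₙ` at `π u` has a unique horizontal lift at `u`
    (∀ (u : Perm (Fin (n + 1))) (k : Fin (n + 1)), k ≠ u 0 →
      ∃! v : Perm (Fin (n + 1)),
        (∃ i j : Fin (n + 1), i ≠ j ∧ v = u * Equiv.swap i j) ∧ v 0 = k) ∧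
    -- the lift of the edge `(π u, k)` at `u` is `u · (1, u⁻¹ k)`, and its label
    -- `x_{u(1)} − x_{u(u⁻¹ k)}` equals the base label `x_{π u} − x_k`
    (∀ (u : Perm (Fin (n + 1))) (k : Fin (n + 1)), k ≠ u 0 →
      (u * Equiv.swap 0 (u⁻¹ k)) 0 = k ∧
      (X (u 0) - X (u (u⁻¹ k)) : MvPolynomial (Fin (n + 1)) ℝ) = X (u 0) - X k) ∧
    -- the transition maps `Φ_{i,j}(u) = (i,j)·u` map the fiber over `i` to the fiber
    -- over `j`, are isomorphisms of graphs on the fibers, and intertwine the axial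
    -- functions via `Ψ_{i,j}(x_r) = x_{(i,j)(r)}`
    (∀ i j : Fin (n + 1), i ≠ j → ∀ u : Perm (Fin (n + 1)), u 0 = i →
      (Equiv.swap i j * u) 0 = j ∧
      (∀ a b : Fin (n + 1), a ≠ 0 → b ≠ 0 → a ≠ b →
        ((Equiv.swap i j * u * Equiv.swap a b) 0 = (Equiv.swap i j * u) 0) ∧
        (X ((Equiv.swap i j * u) a) - X ((Equiv.swap i j * u) b)
            : MvPolynomial (Fin (n + 1)) ℝ)
          = X (Equiv.swap i j (u a)) - X (Equiv.swap i j (u b)))) := by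

  refine ⟨?_, ?_, ?_, ?_⟩
  · intro u i j hij
    constructor
    · intro h
      have h0 : Equiv.swap i j 0 = 0 := u.injective h
      constructor
      · rintro rfl
        rw [Equiv.swap_apply_left] at h0
        exact hij h0.symm
      · rintro rfl
        rw [Equiv.swap_apply_right] at h0
        exact hij h0
    · rintro ⟨hi, hj⟩
      have : Equiv.swap i j 0 = 0 := Equiv.swap_apply_of_ne_of_ne (Ne.symm hi) (Ne.symm hj)
      simp [Perm.mul_apply, this]
  · intro u k hk
    have hne : (0 : Fin (n+1)) ≠ u⁻¹ k := by
      intro h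
      apply hk
      rw [h, ← Perm.mul_apply, mul_inv_cancel, Perm.one_apply]
    refine ⟨u * Equiv.swap 0 (u⁻¹ k), ⟨⟨0, u⁻¹ k, hne, rfl⟩, by
      simp [Perm.mul_apply, Equiv.swap_apply_left]⟩, ?_⟩
    rintro v ⟨⟨i, j, hij, rfl⟩, hv⟩
    simp only [Perm.mul_apply] at hv
    rcases eq_or_ne i 0 with rfl | hi
    · rw [Equiv.swap_apply_left] at hv
      have : j = u⁻¹ k := by rw [← hv]; simp
      rw [this]
    · rcases eq_or_ne j 0 with rfl | hj
      · rw [Equiv.swap_apply_right] at hv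
        have : i = u⁻¹ k := by rw [← hv]; simp
        rw [this, Equiv.swap_comm]
      · rw [Equiv.swap_apply_of_ne_of_ne (Ne.symm hi) (Ne.symm hj)] at hv
        exact absurd hv.symm hk
  · intro u k hk
    refine ⟨?_, by simp⟩
    simp [Perm.mul_apply, Equiv.swap_apply_left]
  · intro i j hij u hu
    refine ⟨by simp [Perm.mul_apply, hu], ?_⟩
    intro a b ha hb hab
    refine ⟨?_, by simp [Perm.mul_apply]⟩
    simp only [Perm.mul_apply]
    rw [Equiv.swap_apply_of_ne_of_ne (Ne.symm ha) (Ne.symm hb)]
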